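/- Let p be a prime, r ≥ 1 an integer, and f : ℕ → ℕ. Then binom(p·r, p)_f ≡ f(0)^{p·(r−1)} · f(1)^p · C(p·r, p) (mod p·r), where C(p·r, p) denotes the ordinary binomial coefficient. -/

import Mathlib

/-- The extended binomial coefficient `binom(k,n)_f`: the sum, over all
`k`-tuples `(π₁,…,π_k)` of nonnegative integers with `π₁ + ⋯ + π_k = n`,
of the products `f(π₁)⋯f(π_k)`. It counts the `f`-weighted integer
compositions of `n` with exactly `k` parts. -/
def extBinom (f : ℕ → ℕ) (k n : ℕ) : ℕ :=
  ∑ π ∈ Finset.Nat.antidiagonalTuple k n, ∏ i, f (π i)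

namespace MannShanksAux

open Finset
open Fin.NatCast

/-! ### Periodicity lemmas for functions on `ℕ` -/

lemma periodic_mul {α : Type*} (P : ℕ → α) (d : ℕ) (hP : ∀ n, P (n + d) = P n) :
    ∀ t n, P (n + t * d) = P n := by
  intro t
  induction t with
  | zero => simp
  | succ t ih =>
    intro n
    rw [Nat.succ_mul, ← add_assoc, hP, ih]

lemma periodic_gcd {α : Type*} (P : ℕ → α) :
    ∀ a b : ℕ, (∀ n, P (n + a) = P n) → (∀ n, P (n + b) = P n) →
      ∀ n, P (n + Nat.gcd a b) = P n := by
  intro a b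
  induction a, b using Nat.gcd.induction with
  | H0 b => intro _ hb; simpa using hb
  | H1 a b ha ih =>
    intro hA hB
    rw [Nat.gcd_rec]
    refine ih (fun n => ?_) hA
    have h : P (n + b % a + b / a * a) = P (n + b % a) := periodic_mul P a hA _ _
    rw [add_assoc, Nat.mod_add_div'] at h
    rw [← h, hB]

lemma sum_range_periodic (P : ℕ → ℕ) (d : ℕ) (hP : ∀ n, P (n + d) = P n) (m : ℕ) :
    ∑ i ∈ range (m * d), P i = m * ∑ i ∈ range d, P i := by
  induction m with
  | zero => simp
  | succ m ih =>
    rw [Nat.succ_mul, Finset.sum_range_add, ih, add_mul, one_mul]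
    congr 1
    refine Finset.sum_congr rfl fun i _ => ?_
    rw [add_comm (m * d) i, periodic_mul P d hP]

lemma prod_range_periodic (P : ℕ → ℕ) (d : ℕ) (hP : ∀ n, P (n + d) = P n) (m : ℕ) :
    ∏ i ∈ range (m * d), P i = (∏ i ∈ range d, P i) ^ m := by
  induction m with
  | zero => simp
  | succ m ih =>
    rw [Nat.succ_mul, Finset.prod_range_add, ih, pow_succ]
    congr 1
    refine Finset.prod_congr rfl fun i _ => ?_
    rw [add_comm (m * d) i, periodic_mul P d hP]

lemma sum_eq_one {s : Finset ℕ} {g : ℕ → ℕ} (h : ∑ i ∈ s, g i = 1) :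
    ∃ a ∈ s, g a = 1 ∧ ∀ b ∈ s, b ≠ a → g b = 0 := by
  obtain ⟨a, ha, hga⟩ : ∃ a ∈ s, g a ≠ 0 := by
    refine Finset.exists_ne_zero_of_sum_ne_zero ?_
    simp [h]
  have h2 : g a + ∑ x ∈ s.erase a, g x = 1 := by rw [Finset.add_sum_erase s g ha, h]
  have hga1 : g a = 1 := by omega
  have hz : ∑ x ∈ s.erase a, g x = 0 := by omega
  refine ⟨a, ha, hga1, fun b hb hba => ?_⟩
  rw [Finset.sum_eq_zero_iff] at hz
  exact hz b (Finset.mem_erase.mpr ⟨hba, hb⟩)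

/-! ### Cyclic rotation of tuples -/

variable {k : ℕ} [NeZero k]

/-- Rotation of a tuple by `g` positions. -/
def rot (g : ℕ) (π : Fin k → ℕ) : Fin k → ℕ := fun i => π (i + (g : Fin k))

/-- Periodic extension of a tuple to `ℕ`. -/
def extN (π : Fin k → ℕ) : ℕ → ℕ := fun n => π (n : Fin k)

lemma ext_apply (π : Fin k → ℕ) (i : Fin k) : extN π i.val = π i := by
  simp [extN, Fin.cast_val_eq_self]

lemma rot_zero (π : Fin k → ℕ) : rot 0 π = π := by funext i; simp [rot]

lemma rot_k (π : Fin k → ℕ) : rot k π = π := by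
  funext i; simp [rot, Fin.natCast_self]

lemma rot_rot (g h : ℕ) (π : Fin k → ℕ) : rot g (rot h π) = rot (g + h) π := by
  funext i; simp [rot, Nat.cast_add, add_assoc]

lemma rot_cancel {g : ℕ} {π₁ π₂ : Fin k → ℕ} (h : rot g π₁ = rot g π₂) : π₁ = π₂ := by
  funext j
  have := congrFun h (j - (g : Fin k))
  simpa [rot, sub_add_cancel] using this

lemma period_iff (g : ℕ) (π : Fin k → ℕ) :
    rot g π = π ↔ ∀ n, extN π (n + g) = extN π n := by
  constructor
  · intro h n
    have := congrFun h (n : Fin k)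
    simpa [rot, extN, Nat.cast_add] using this
  · intro h
    funext i
    have := h i.val
    simpa [extN, Nat.cast_add, Fin.cast_val_eq_self, rot] using this

lemma ext_period_k (π : Fin k → ℕ) (n : ℕ) : extN π (n + k) = extN π n := by
  simp [extN, Nat.cast_add, Fin.natCast_self]

lemma sum_fin_eq (π : Fin k → ℕ) : ∑ i, π i = ∑ i ∈ range k, extN π i := by
  rw [← Fin.sum_univ_eq_sum_range (extN π) k]
  exact Finset.sum_congr rfl fun i _ => (ext_apply π i).symm

lemma prod_fin_eq (f : ℕ → ℕ) (π : Fin k → ℕ) :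
    ∏ i, f (π i) = ∏ i ∈ range k, f (extN π i) := by
  rw [← Fin.prod_univ_eq_prod_range (fun n => f (extN π n)) k]
  exact Finset.prod_congr rfl fun i _ => by rw [ext_apply]

lemma sum_rot (g : ℕ) (π : Fin k → ℕ) : ∑ i, rot g π i = ∑ i, π i :=
  Fintype.sum_equiv (Equiv.addRight (g : Fin k)) _ _ (fun _ => rfl)

lemma prod_rot (f : ℕ → ℕ) (g : ℕ) (π : Fin k → ℕ) :
    ∏ i, f (rot g π i) = ∏ i, f (π i) :=
  Fintype.prod_equiv (Equiv.addRight (g : Fin k)) _ _ (fun _ => rfl)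

lemma rot_mul_k (t : ℕ) (x : Fin k → ℕ) : rot (k * t) x = x := by
  induction t with
  | zero => simpa using rot_zero x
  | succ t ih => rw [Nat.mul_succ, ← rot_rot (k*t) k x, rot_k, ih]

lemma rot_left_inverse (g : ℕ) (x : Fin k → ℕ) :
    rot (k * (g / k + 1) - g) (rot g x) = x := by
  rw [rot_rot]
  have h1 : g % k < k := Nat.mod_lt _ (Nat.pos_of_neZero k)
  have h2 : k * (g / k) + g % k = g := Nat.div_add_mod g k
  have h3 : k * (g / k + 1) - g + g = k * (g / k + 1) := by
    have h4 : g ≤ k * (g / k + 1) := by rw [Nat.mul_add, Nat.mul_one]; omega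
    omega
  rw [h3, rot_mul_k]

lemma rot_mod (g : ℕ) (π : Fin k → ℕ) : rot g π = rot (g % k) π := by
  conv_lhs => rw [← Nat.div_add_mod g k]
  rw [Nat.add_comm, ← rot_rot, rot_mul_k]

/-- On a rotation-closed set where the rotation action is free, the size of
the group divides any rotation-invariant weighted sum. -/
lemma dvd_sum_free (w : (Fin k → ℕ) → ℕ)
    (hw : ∀ g π, w (rot g π) = w π) :
    ∀ s : Finset (Fin k → ℕ),
      (∀ π ∈ s, ∀ g : ℕ, rot g π ∈ s) →
      (∀ π ∈ s, ∀ m : ℕ, 0 < m → m < k → rot m π ≠ π) →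
      k ∣ ∑ π ∈ s, w π := by
  classical
  intro s
  induction s using Finset.strongInduction with
  | _ s ih =>
    intro hcl hfree
    rcases s.eq_empty_or_nonempty with rfl | ⟨π, hπ⟩
    · simp
    have hkpos : 0 < k := Nat.pos_of_neZero k
    have key : ∀ g h : ℕ, g < h → h < k → rot g π ≠ rot h π := by
      intro g h hgh hhk he
      have h1 : rot (k - h) (rot g π) = rot (k - h) (rot h π) := by rw [he]
      rw [rot_rot, rot_rot, Nat.sub_add_cancel hhk.le, rot_k] at h1
      exact hfree π hπ (k - h + g) (by omega) (by omega) h1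
    have hinj : ∀ g ∈ range k, ∀ h ∈ range k, rot g π = rot h π → g = h := by
      intro g hg h hh he
      rcases lt_trichotomy g h with h1 | h1 | h1
      · exact absurd he (key g h h1 (mem_range.mp hh))
      · exact h1
      · exact absurd he.symm (key h g h1 (mem_range.mp hg))
    set O := (range k).image (fun g => rot g π) with hO
    have hπO : π ∈ O :=
      Finset.mem_image.mpr ⟨0, Finset.mem_range.mpr hkpos, rot_zero π⟩
    have hOsub : O ⊆ s := by
      intro x hx
      obtain ⟨g, _, rfl⟩ := Finset.mem_image.mp hx
      exact hcl π hπ g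
    have hOrot : ∀ x ∈ O, ∀ g : ℕ, rot g x ∈ O := by
      intro x hx g
      obtain ⟨h, _, rfl⟩ := Finset.mem_image.mp hx
      rw [rot_rot, rot_mod]
      exact Finset.mem_image.mpr ⟨(g + h) % k,
        Finset.mem_range.mpr (Nat.mod_lt _ hkpos), rfl⟩
    have hsumO : ∑ x ∈ O, w x = k * w π := by
      rw [hO, Finset.sum_image hinj]
      simp [hw, mul_comm]
    have hss : s \ O ⊂ s := Finset.sdiff_ssubset hOsub ⟨π, hπO⟩
    have hcl' : ∀ x ∈ s \ O, ∀ g : ℕ, rot g x ∈ s \ O := by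
      intro x hx g
      rw [Finset.mem_sdiff] at hx ⊢
      refine ⟨hcl x hx.1 g, fun hmem => hx.2 ?_⟩
      have := hOrot _ hmem (k * (g / k + 1) - g)
      rwa [rot_left_inverse] at this
    have hfree' : ∀ x ∈ s \ O, ∀ m : ℕ, 0 < m → m < k → rot m x ≠ x :=
      fun x hx => hfree x (Finset.mem_sdiff.mp hx).1
    have hrest := ih (s \ O) hss hcl' hfree'
    have hsplit : ∑ x ∈ s, w x = ∑ x ∈ s \ O, w x + ∑ x ∈ O, w x :=
      (Finset.sum_sdiff hOsub).symm
    rw [hsplit, hsumO]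
    exact dvd_add hrest (Dvd.intro _ rfl)

end MannShanksAux

open MannShanksAux Finset
open Fin.NatCast

theorem extBinom_mann_shanks (p : ℕ) (hp : p.Prime) (r : ℕ) (hr : 1 ≤ r)
    (f : ℕ → ℕ) :
    extBinom f (p * r) p ≡
      f 0 ^ (p * (r - 1)) * f 1 ^ p * Nat.choose (p * r) p [MOD p * r] := by
  classical
  have hppos : 0 < p := hp.pos
  have hrpos : 0 < r := hr
  have hk : 0 < p * r := Nat.mul_pos hppos hrpos
  haveI : NeZero (p * r) := ⟨hk.ne'⟩
  set A := Finset.Nat.antidiagonalTuple (p * r) p with hA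
  set w : (Fin (p * r) → ℕ) → ℕ := fun π => ∏ i, f (π i) with hwdef
  have hw : ∀ (g : ℕ) π, w (rot g π) = w π := fun g π => prod_rot f g π
  have hmem : ∀ π : Fin (p * r) → ℕ, π ∈ A ↔ ∑ i, π i = p := fun π =>
    Finset.Nat.mem_antidiagonalTuple
  -- rotations preserve membership in `A`
  have hArot : ∀ π ∈ A, ∀ g : ℕ, rot g π ∈ A := by
    intro π hπ g
    rw [hmem] at hπ ⊢
    rw [sum_rot, hπ]
  -- a tuple in `A` fixed by any nontrivial rotation is fixed by `rot r`
  have hspec : ∀ π ∈ A, ∀ m : ℕ, 0 < m → m < p * r → rot m π = π → rot r π = π := by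
    intro π hπ m hm1 hm2 hrot
    have hPm : ∀ n, extN π (n + m) = extN π n := (period_iff m π).mp hrot
    have hPk : ∀ n, extN π (n + p * r) = extN π n := ext_period_k π
    obtain ⟨d, hd⟩ : ∃ d, Nat.gcd m (p * r) = d := ⟨_, rfl⟩
    have hPd : ∀ n, extN π (n + d) = extN π n := hd ▸ periodic_gcd _ m (p * r) hPm hPk
    have hdk : d ∣ p * r := hd ▸ Nat.gcd_dvd_right m (p * r)
    have hdm : d ≤ m := Nat.le_of_dvd hm1 (hd ▸ Nat.gcd_dvd_left m (p * r))
    have he : (p * r / d) * d = p * r := Nat.div_mul_cancel hdk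
    have hsum : ∑ i ∈ range (p * r), extN π i = p := by
      rw [← sum_fin_eq]; exact (hmem π).mp hπ
    have hps : p = (p * r / d) * ∑ i ∈ range d, extN π i := by
      have h5 := sum_range_periodic (extN π) d hPd (p * r / d)
      rw [he, hsum] at h5
      exact h5
    have hdvd : (p * r / d) ∣ p := ⟨_, hps⟩
    rcases hp.eq_one_or_self_of_dvd _ hdvd with h1 | h1
    · rw [h1, one_mul] at he
      omega
    · rw [h1] at he
      have hdr : d = r := Nat.eq_of_mul_eq_mul_left hppos he
      exact (period_iff r π).mpr (hdr ▸ hPd)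
  -- the "special" tuples
  set χ : Fin r → (Fin (p * r) → ℕ) :=
    fun j i => if (i : ℕ) % r = (j : ℕ) then 1 else 0 with hχ
  have hext : ∀ (j : Fin r) (n : ℕ), extN (χ j) n = if n % r = (j : ℕ) then 1 else 0 := by
    intro j n
    have hdr : r ∣ p * r := dvd_mul_left r p
    simp [extN, hχ, Fin.val_natCast, Nat.mod_mod_of_dvd n hdr]
  have hperχ : ∀ (j : Fin r) (n : ℕ), extN (χ j) (n + r) = extN (χ j) n := by
    intro j n
    simp [hext, Nat.add_mod_right]
  have hblock : ∀ j : Fin r, ∑ i ∈ range r, extN (χ j) i = 1 := by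
    intro j
    have h1 : ∀ i ∈ range r, extN (χ j) i = if i = (j : ℕ) then 1 else 0 := by
      intro i hi
      rw [hext, Nat.mod_eq_of_lt (mem_range.mp hi)]
    rw [Finset.sum_congr rfl h1, Finset.sum_ite_eq' (range r) ((j : ℕ)) (fun _ => 1)]
    simp [j.isLt]
  have hχA : ∀ j : Fin r, χ j ∈ A := by
    intro j
    rw [hmem, sum_fin_eq, sum_range_periodic (extN (χ j)) r (hperχ j) p, hblock, mul_one]
  have hχrot : ∀ j : Fin r, rot r (χ j) = χ j := fun j =>
    (period_iff r (χ j)).mpr (hperχ j)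
  -- the filter of special tuples is exactly the image of χ
  have himg : A.filter (fun π => rot r π = π) = Finset.image χ Finset.univ := by
    apply Finset.Subset.antisymm
    · intro π hπ
      rw [Finset.mem_filter] at hπ
      obtain ⟨hπA, hπrot⟩ := hπ
      have hPr : ∀ n, extN π (n + r) = extN π n := (period_iff r π).mp hπrot
      have hsum : ∑ i ∈ range (p * r), extN π i = p := by
        rw [← sum_fin_eq]; exact (hmem π).mp hπA
      have hps : p * ∑ i ∈ range r, extN π i = p := by
        rw [← sum_range_periodic (extN π) r hPr p]
        exact hsum
      have hB : ∑ i ∈ range r, extN π i = 1 :=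
        Nat.eq_of_mul_eq_mul_left hppos (by rw [mul_one]; exact hps)
      obtain ⟨a, ha, ha1, ha0⟩ := sum_eq_one hB
      have har : a < r := mem_range.mp ha
      refine Finset.mem_image.mpr ⟨⟨a, har⟩, Finset.mem_univ _, ?_⟩
      funext i
      have hiv : extN π i.val = extN π (i.val % r) := by
        conv_lhs => rw [← Nat.mod_add_div' i.val r]
        rw [periodic_mul (extN π) r hPr]
      have hmr : i.val % r < r := Nat.mod_lt _ hrpos
      rw [hχ]
      simp only
      rw [← ext_apply π i, hiv]
      by_cases hcase : i.val % r = a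
      · rw [if_pos hcase, hcase, ha1]
      · rw [if_neg hcase]
        exact (ha0 _ (mem_range.mpr hmr) hcase).symm
    · intro π hπ
      obtain ⟨j, _, rfl⟩ := Finset.mem_image.mp hπ
      exact Finset.mem_filter.mpr ⟨hχA j, hχrot j⟩
  -- χ is injective
  have hχinj : ∀ j ∈ (Finset.univ : Finset (Fin r)), ∀ j' ∈ Finset.univ,
      χ j = χ j' → j = j' := by
    intro j _ j' _ h
    have hjk : (j : ℕ) < p * r := lt_of_lt_of_le j.isLt (Nat.le_mul_of_pos_left r hppos)
    have h0 := congrFun h ⟨(j : ℕ), hjk⟩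
    rw [hχ] at h0
    simp only [Nat.mod_eq_of_lt j.isLt] at h0
    have h2 : (1 : ℕ) = if (j : ℕ) = (j' : ℕ) then 1 else 0 := by simpa using h0
    by_cases hc : (j : ℕ) = (j' : ℕ)
    · exact Fin.ext hc
    · rw [if_neg hc] at h2
      exact absurd h2 one_ne_zero
  -- weight of a special tuple
  have hwχ : ∀ j : Fin r, w (χ j) = (f 1 * f 0 ^ (r - 1)) ^ p := by
    intro j
    have hper : ∀ n, f (extN (χ j) (n + r)) = f (extN (χ j) n) := fun n => by rw [hperχ]
    rw [hwdef]
    simp only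
    rw [prod_fin_eq f (χ j), prod_range_periodic (fun n => f (extN (χ j) n)) r hper p]
    congr 1
    have h1 : ∀ i ∈ range r, f (extN (χ j) i) = if i = (j : ℕ) then f 1 else f 0 := by
      intro i hi
      rw [hext, Nat.mod_eq_of_lt (mem_range.mp hi), apply_ite f]
    rw [Finset.prod_congr rfl h1,
      ← Finset.mul_prod_erase (range r) _ (mem_range.mpr j.isLt), if_pos rfl]
    congr 1
    rw [Finset.prod_congr rfl (fun i hi => if_neg (Finset.mem_erase.mp hi).1),
      Finset.prod_const, Finset.card_erase_of_mem (mem_range.mpr j.isLt), card_range]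
  -- sum over special tuples
  have hsumspec : ∑ π ∈ A.filter (fun π => rot r π = π), w π
      = r * (f 1 * f 0 ^ (r - 1)) ^ p := by
    rw [himg, Finset.sum_image hχinj]
    simp [hwχ, mul_comm]
  -- the rest is divisible by p*r
  have hrest : (p * r) ∣ ∑ π ∈ A.filter (fun π => ¬ rot r π = π), w π := by
    apply dvd_sum_free w hw
    · intro π hπ g
      rw [Finset.mem_filter] at hπ ⊢
      refine ⟨hArot π hπ.1 g, fun hcon => hπ.2 ?_⟩
      have : rot r (rot g π) = rot (r + g) π := rot_rot r g π
      rw [this, add_comm r g, ← rot_rot g r π] at hcon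
      exact rot_cancel hcon
    · intro π hπ m hm1 hm2 hcon
      rw [Finset.mem_filter] at hπ
      exact hπ.2 (hspec π hπ.1 m hm1 hm2 hcon)
  obtain ⟨t, ht⟩ := hrest
  -- decomposition of the extended binomial coefficient
  have hEB : extBinom f (p * r) p = r * (f 1 * f 0 ^ (r - 1)) ^ p + (p * r) * t := by
    have := Finset.sum_filter_add_sum_filter_not A (fun π => rot r π = π) w
    rw [hsumspec, ht] at this
    exact this.symm
  have hW : (f 1 * f 0 ^ (r - 1)) ^ p = f 0 ^ (p * (r - 1)) * f 1 ^ p := by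
    rw [mul_pow, ← pow_mul, mul_comm (r - 1) p, mul_comm]
  have hcongr1 : extBinom f (p * r) p ≡
      r * (f 0 ^ (p * (r - 1)) * f 1 ^ p) [MOD p * r] := by
    rw [hEB, hW]
    show (r * (f 0 ^ (p * (r - 1)) * f 1 ^ p) + (p * r) * t) % (p * r)
      = (r * (f 0 ^ (p * (r - 1)) * f 1 ^ p)) % (p * r)
    rw [Nat.add_mul_mod_self_left]
  -- the binomial coefficient congruence
  have e1 : (p * r - 1) + 1 = p * r := Nat.succ_pred_eq_of_pos hk
  have e2 : (p - 1) + 1 = p := Nat.succ_pred_eq_of_pos hppos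
  have e3 := Nat.add_one_mul_choose_eq (p * r - 1) (p - 1)
  rw [e1, e2] at e3
  have hCr : Nat.choose (p * r) p = r * Nat.choose (p * r - 1) (p - 1) := by
    apply Nat.eq_of_mul_eq_mul_left hppos
    calc p * Nat.choose (p * r) p = Nat.choose (p * r) p * p := mul_comm _ _
      _ = (p * r) * Nat.choose (p * r - 1) (p - 1) := e3.symm
      _ = p * (r * Nat.choose (p * r - 1) (p - 1)) := by ring
  haveI : Fact p.Prime := ⟨hp⟩
  have edecomp : p * r - 1 = p * (r - 1) + (p - 1) := by
    have h5 : p * r = p * (r - 1) + p := by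
      have h6 : (r - 1) + 1 = r := Nat.succ_pred_eq_of_pos hrpos
      calc p * r = p * ((r - 1) + 1) := by rw [h6]
        _ = p * (r - 1) + p := by ring
    omega
  have em : (p * r - 1) % p = p - 1 := by
    rw [edecomp, Nat.mul_add_mod, Nat.mod_eq_of_lt (by omega)]
  have ed : (p * r - 1) / p = r - 1 := by
    rw [edecomp, Nat.mul_add_div hppos, Nat.div_eq_of_lt (by omega), add_zero]
  have em2 : (p - 1) % p = p - 1 := Nat.mod_eq_of_lt (by omega)
  have ed2 : (p - 1) / p = 0 := Nat.div_eq_of_lt (by omega)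
  have hL := Choose.choose_modEq_choose_mod_mul_choose_div_nat
    (n := p * r - 1) (k := p - 1) (p := p)
  rw [em, ed, em2, ed2, Nat.choose_self, Nat.choose_zero_right, one_mul] at hL
  have hCrmod : Nat.choose (p * r) p ≡ r [MOD p * r] := by
    rw [hCr]
    have h7 := Nat.ModEq.mul_left' (c := r) hL
    rw [mul_one, mul_comm r p] at h7
    exact h7
  have goalW : f 0 ^ (p * (r - 1)) * f 1 ^ p * Nat.choose (p * r) p ≡
      f 0 ^ (p * (r - 1)) * f 1 ^ p * r [MOD p * r] :=
    hCrmod.mul_left _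
  have hre : r * (f 0 ^ (p * (r - 1)) * f 1 ^ p)
      = f 0 ^ (p * (r - 1)) * f 1 ^ p * r := by ring
  rw [hre] at hcongr1
  exact hcongr1.trans goalW.symm
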